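/- Let λ, μ be partitions with n nonnegative integer parts and let w ∈ S_n. Then K_{λ,μ}(w w_0) = GT(λ,w,μ) as subsets of GT(λ)×GT(μ); that is, the union of all reduced BiKogan faces K_{λ,μ}(F,F′) with ϖ(F,F′) = w w_0 equals the set of pairs (P,Q) ∈ GT(λ)×GT(μ) with 𝔭(P,Q) ≤ w. -/

import Mathlib

open scoped Classical

namespace KK

/-- The simple transposition `s_j = (j, j+1)` in `S_n` (1-indexed letters `1 ≤ j ≤ n-1`);
junk value `1` out of range. -/
def simpleRefl (n : ℕ) (j : ℕ) : Equiv.Perm (Fin n) :=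
  if h : 1 ≤ j ∧ j ≤ n - 1 then
    Equiv.swap ⟨j - 1, by omega⟩ ⟨j, by omega⟩
  else 1

/-- The permutation represented by a word in the simple transpositions. -/
def wordProd (n : ℕ) (l : List ℕ) : Equiv.Perm (Fin n) :=
  (l.map (simpleRefl n)).prod

/-- Coxeter length: minimal length of a word in simple transpositions representing `w`. -/
noncomputable def len (n : ℕ) (w : Equiv.Perm (Fin n)) : ℕ :=
  sInf {k | ∃ l : List ℕ, (∀ j ∈ l, 1 ≤ j ∧ j ≤ n - 1) ∧ l.length = k ∧ wordProd n l = w}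

/-- A word is reduced if its letters are genuine simple-transposition indices and its
length equals the Coxeter length of the permutation it represents. -/
def IsReduced (n : ℕ) (l : List ℕ) : Prop :=
  (∀ j ∈ l, 1 ≤ j ∧ j ≤ n - 1) ∧ len n (wordProd n l) = l.length

/-- Bruhat order on `S_n`: `u ≤ w` iff some reduced word for `w` contains a reduced word
for `u` as a subword. -/
def bruhatLE (n : ℕ) (u w : Equiv.Perm (Fin n)) : Prop :=
  ∃ l l' : List ℕ, IsReduced n l ∧ wordProd n l = w ∧
    l'.Sublist l ∧ IsReduced n l' ∧ wordProd n l' = u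

/-- `m` is the greatest element of `K` in the Bruhat order (hence the unique maximal one). -/
def IsBruhatGreatest (n : ℕ) (K : Set (Equiv.Perm (Fin n))) (m : Equiv.Perm (Fin n)) : Prop :=
  m ∈ K ∧ ∀ u ∈ K, bruhatLE n u m

/-- `m` is the least element of `K` in the Bruhat order (hence the unique minimal one). -/
def IsBruhatLeast (n : ℕ) (K : Set (Equiv.Perm (Fin n))) (m : Equiv.Perm (Fin n)) : Prop :=
  m ∈ K ∧ ∀ u ∈ K, bruhatLE n m u

/-- One step of the Demazure product: `w * s_j = max {w, w s_j}` in the Bruhat order. -/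
noncomputable def demStep (n : ℕ) (w : Equiv.Perm (Fin n)) (j : ℕ) : Equiv.Perm (Fin n) :=
  if len n w < len n (w * simpleRefl n j) then w * simpleRefl n j else w

/-- The Demazure product `*(w)` of a (not necessarily reduced) word. -/
noncomputable def demProd (n : ℕ) (l : List ℕ) : Equiv.Perm (Fin n) :=
  l.foldl (demStep n) 1

/-- The binary Demazure product of two permutations, `w * w' = max I(w)I(w')`. -/
noncomputable def demMul (n : ℕ) (w w' : Equiv.Perm (Fin n)) : Equiv.Perm (Fin n) :=
  if h : ∃ m, IsBruhatGreatest n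
      {x | ∃ u v, bruhatLE n u w ∧ bruhatLE n v w' ∧ x = u * v} m
  then h.choose else 1

/-- The longest element `w₀` of `S_n`. -/
def w0 (n : ℕ) : Equiv.Perm (Fin n) := Fin.revPerm



/-- `μ` is a partition with `n` nonnegative integer parts `μ 1 ≥ ⋯ ≥ μ n ≥ 0`. -/
def IsPartition (n : ℕ) (μ : ℕ → ℤ) : Prop :=
  (∀ i, 1 ≤ i → i < n → μ (i + 1) ≤ μ i) ∧ 0 ≤ μ n

/-- `(i, j)` indexes an entry strictly below the top in the triangular array:
`n ≥ i > j ≥ 1`. -/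
def inTriangle (n : ℕ) (p : ℕ × ℕ) : Prop := 1 ≤ p.2 ∧ p.2 < p.1 ∧ p.1 ≤ n

/-- A Gelfand–Tsetlin pattern of size `n`, encoded as a function `a : ℕ → ℕ → ℝ`
(value `a i j` for `n ≥ i ≥ j ≥ 1`, and `0` outside the triangle). -/
def IsGTArray (n : ℕ) (a : ℕ → ℕ → ℝ) : Prop :=
  (∀ i j, 1 ≤ j → j < i → i ≤ n →
      0 ≤ a i j - a (i - 1) j ∧ 0 ≤ a (i - 1) j - a i (j + 1)) ∧
  (∀ i j, j = 0 ∨ i < j ∨ n < i → a i j = 0)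

/-- The Gelfand–Tsetlin polytope `GT(μ)`: GT patterns of size `n` with bottom row `μ`. -/
def GTset (n : ℕ) (μ : ℕ → ℤ) : Set (ℕ → ℕ → ℝ) :=
  {a | IsGTArray n a ∧ ∀ j, 1 ≤ j → j ≤ n → a n j = (μ j : ℝ)}

/-- The integral points `GT_ℤ(μ)` of the Gelfand–Tsetlin polytope. -/
def GTZ (n : ℕ) (μ : ℕ → ℤ) : Set (ℕ → ℕ → ℝ) :=
  {a ∈ GTset n μ | ∀ i j, ∃ m : ℤ, a i j = (m : ℝ)}

/-- The weight of a GT pattern: `wt a i = Σ_{j=1}^i a i j − Σ_{j=1}^{i-1} a (i-1) j`. -/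
noncomputable def wt (a : ℕ → ℕ → ℝ) (i : ℕ) : ℝ :=
  (∑ j ∈ Finset.Icc 1 i, a i j) - ∑ j ∈ Finset.Icc 1 (i - 1), a (i - 1) j

/-- The pairs `(i,j)` with `n ≥ i > j ≥ 1` in increasing lexicographic order. -/
def pairsLex (n : ℕ) : List (ℕ × ℕ) :=
  (List.range' 2 (n - 1)).flatMap fun i => (List.range' 1 (i - 1)).map fun j => (i, j)

/-- The pairs `(i,j)` with `n ≥ i > j ≥ 1` in increasing order for the total order in
which `(i,j)` precedes `(i',j')` iff `i < i'`, or `i = i'` and `j > j'`. -/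
def pairsBar (n : ℕ) : List (ℕ × ℕ) :=
  (List.range' 2 (n - 1)).flatMap fun i => ((List.range' 1 (i - 1)).reverse).map fun j => (i, j)

/-- The pairs `(i,j)` with `n ≥ i > j ≥ 1` in decreasing order for the total order in
which `(i,j)` precedes `(i',j')` iff `i < i'`, or `i = i'` and `j > j'`:
`i` descending and, within each `i`, `j` ascending. -/
def pairsFin (n : ℕ) : List (ℕ × ℕ) :=
  ((List.range' 2 (n - 1)).reverse).flatMap fun i => (List.range' 1 (i - 1)).map fun j => (i, j)

/-- The word `𝔣(P)`: list the pairs `(i,j)` with `a (i-1) j = a i (j+1)` in the order of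
`pairsFin` and record the letter `j` for each. -/
noncomputable def fWord (n : ℕ) (a : ℕ → ℕ → ℝ) : List ℕ :=
  ((pairsFin n).filter fun p => a (p.1 - 1) p.2 = a p.1 (p.2 + 1)).map fun p => p.2

/-- The word `𝔦(Q)`: list the pairs `(i,j)` with `b i j = b (i-1) j` in increasing
lexicographic order and record the letter `i - j` for each. -/
noncomputable def iWord (n : ℕ) (b : ℕ → ℕ → ℝ) : List ℕ :=
  ((pairsLex n).filter fun p => b p.1 p.2 = b (p.1 - 1) p.2).map fun p => p.1 - p.2



/-- The sequence `d_t`, `1 ≤ t ≤ i+1`, used to define the crystal operators `e_i, f_i`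
(with the convention `a_{k,k+1} = 0` for `k ∈ {i-1, i}`). -/
noncomputable def dseq (a : ℕ → ℕ → ℝ) (i : ℕ) : ℕ → ℝ
  | 0 => 0
  | 1 => a i 1 - a (i + 1) 1
  | (t + 2) => dseq a i (t + 1) + a i (t + 1) + (if t + 2 = i + 1 then 0 else a i (t + 2))
      - (if t + 1 = i then 0 else a (i - 1) (t + 1)) - a (i + 1) (t + 2)

/-- `d = min {d_1, …, d_{i+1}}`. -/
noncomputable def dmin (a : ℕ → ℕ → ℝ) (i : ℕ) : ℝ :=
  ((Finset.Icc 1 (i + 1)).image (dseq a i)).min'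
    (Finset.Nonempty.image ⟨1, by simp⟩ _)

/-- `m`: the smallest index `t ∈ [1, i+1]` with `d_t = d`. -/
noncomputable def mIdx (a : ℕ → ℕ → ℝ) (i : ℕ) : ℕ :=
  sInf {t | t ∈ Finset.Icc 1 (i + 1) ∧ dseq a i t = dmin a i}

/-- `M`: the largest index `t ∈ [1, i+1]` with `d_t = d`. -/
noncomputable def MIdx (a : ℕ → ℕ → ℝ) (i : ℕ) : ℕ :=
  sSup {t | t ∈ Finset.Icc 1 (i + 1) ∧ dseq a i t = dmin a i}

/-- The raising crystal operator `e_i` (`none` plays the role of `0`). -/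
noncomputable def eOp (i : ℕ) (a : ℕ → ℕ → ℝ) : Option (ℕ → ℕ → ℝ) :=
  if dmin a i = 0 then none
  else some fun i' j' => if i' = i ∧ j' = mIdx a i then a i' j' + 1 else a i' j'

/-- The lowering crystal operator `f_i` (`none` plays the role of `0`). -/
noncomputable def fOp (i : ℕ) (a : ℕ → ℕ → ℝ) : Option (ℕ → ℕ → ℝ) :=
  if MIdx a i = i + 1 then none
  else some fun i' j' => if i' = i ∧ j' = MIdx a i then a i' j' - 1 else a i' j'

/-- `m`-fold iteration of a partial operator. -/
noncomputable def iterOp (op : (ℕ → ℕ → ℝ) → Option (ℕ → ℕ → ℝ)) :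
    ℕ → (ℕ → ℕ → ℝ) → Option (ℕ → ℕ → ℝ)
  | 0 => fun x => some x
  | (m + 1) => fun x => (op x).bind (iterOp op m)

/-- Apply `op i₁ ^ m₁ ∘ ⋯ ∘ op i_k ^ m_k` to `x`, given the list `[(i₁,m₁),…,(i_k,m_k)]`
(the last pair acts first). -/
noncomputable def applyWord (op : ℕ → (ℕ → ℕ → ℝ) → Option (ℕ → ℕ → ℝ)) :
    List (ℕ × ℕ) → (ℕ → ℕ → ℝ) → Option (ℕ → ℕ → ℝ)
  | [] => fun x => some x
  | (p :: rest) => fun x => (applyWord op rest x).bind (iterOp (op p.1) p.2)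

/-- The highest-weight element `G⁰_μ` of `GT_ℤ(μ)`: the element killed by every `e_i`. -/
noncomputable def G0 (n : ℕ) (μ : ℕ → ℤ) : ℕ → ℕ → ℝ :=
  if h : ∃ P, P ∈ GTZ n μ ∧ ∀ i, 1 ≤ i → i ≤ n - 1 → eOp i P = none then h.choose else 0

/-- The lowest-weight element `G*_μ` of `GT_ℤ(μ)`: the element killed by every `f_i`. -/
noncomputable def Gstar (n : ℕ) (μ : ℕ → ℤ) : ℕ → ℕ → ℝ :=
  if h : ∃ P, P ∈ GTZ n μ ∧ ∀ i, 1 ≤ i → i ≤ n - 1 → fOp i P = none then h.choose else 0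

/-- The Demazure crystal `D(μ, w)` computed from the reduced word `l` for `w`:
`{f_{i₁}^{m₁} ⋯ f_{i_k}^{m_k}(G⁰_μ)} ∩ GT_ℤ(μ)`. -/
noncomputable def demCrystal (n : ℕ) (μ : ℕ → ℤ) (l : List ℕ) : Set (ℕ → ℕ → ℝ) :=
  {P | P ∈ GTZ n μ ∧
    ∃ ms : List ℕ, ms.length = l.length ∧ applyWord fOp (l.zip ms) (G0 n μ) = some P}

/-- The opposite Demazure crystal `D(μ, w)^op` computed from the reduced word `l`
for `w·w₀`: `{e_{j₁}^{m₁} ⋯ e_{j_t}^{m_t}(G*_μ)} ∩ GT_ℤ(μ)`. -/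
noncomputable def opDemCrystal (n : ℕ) (μ : ℕ → ℤ) (l : List ℕ) : Set (ℕ → ℕ → ℝ) :=
  {P | P ∈ GTZ n μ ∧
    ∃ ms : List ℕ, ms.length = l.length ∧ applyWord eOp (l.zip ms) (Gstar n μ) = some P}

/-- `σ(F)`: the product of `s_{i-j}` over `(i,j) ∈ F` in increasing lexicographic order. -/
noncomputable def sigmaF (n : ℕ) (F : Finset (ℕ × ℕ)) : Equiv.Perm (Fin n) :=
  wordProd n (((pairsLex n).filter fun p => p ∈ F).map fun p => p.1 - p.2)

/-- `σ̄(F)`: the product of `s_j` over `(i,j) ∈ F` in increasing order for the total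
order in which `(i,j)` precedes `(i',j')` iff `i < i'`, or `i = i'` and `j > j'`. -/
noncomputable def sigmaBarF (n : ℕ) (F : Finset (ℕ × ℕ)) : Equiv.Perm (Fin n) :=
  wordProd n (((pairsBar n).filter fun p => p ∈ F).map fun p => p.2)

/-- The Kogan face `K(μ, F)`: the face of `GT(μ)` cut out by `a i j = a (i-1) j`,
`(i,j) ∈ F`. -/
def KoganFace (n : ℕ) (μ : ℕ → ℤ) (F : Finset (ℕ × ℕ)) : Set (ℕ → ℕ → ℝ) :=
  {a ∈ GTset n μ | ∀ p ∈ F, a p.1 p.2 = a (p.1 - 1) p.2}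

/-- The dual Kogan face `K̄(μ, F)`: the face of `GT(μ)` cut out by
`a (i-1) j = a i (j+1)`, `(i,j) ∈ F`. -/
def dualKoganFace (n : ℕ) (μ : ℕ → ℤ) (F : Finset (ℕ × ℕ)) : Set (ℕ → ℕ → ℝ) :=
  {a ∈ GTset n μ | ∀ p ∈ F, a (p.1 - 1) p.2 = a p.1 (p.2 + 1)}

/-- The BiKogan face `K_{λ,μ}(F, F')` of `GT(λ) × GT(μ)`. -/
def biKoganFace (n : ℕ) (lam μ : ℕ → ℤ) (F F' : Finset (ℕ × ℕ)) :
    Set ((ℕ → ℕ → ℝ) × (ℕ → ℕ → ℝ)) :=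
  {PQ | PQ.1 ∈ GTset n lam ∧ PQ.2 ∈ GTset n μ ∧
    (∀ p ∈ F, PQ.1 (p.1 - 1) p.2 = PQ.1 p.1 (p.2 + 1)) ∧
    (∀ p ∈ F', PQ.2 p.1 p.2 = PQ.2 (p.1 - 1) p.2)}

/-- `ϖ(F, F') = σ̄(F)⁻¹ · σ(F')`. -/
noncomputable def biVarpi (n : ℕ) (F F' : Finset (ℕ × ℕ)) : Equiv.Perm (Fin n) :=
  (sigmaBarF n F)⁻¹ * sigmaF n F'

/-- The BiKogan face `K_{λ,μ}(F, F')` is reduced if `ℓ(ϖ(F,F')) = |F| + |F'|`. -/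
def biKoganReduced (n : ℕ) (F F' : Finset (ℕ × ℕ)) : Prop :=
  len n (biVarpi n F F') = F.card + F'.card


/-! ### Part A: inversions and length -/

/-- The set of inversions of a permutation. -/
def invSet (n : ℕ) (w : Equiv.Perm (Fin n)) : Finset (Fin n × Fin n) :=
  Finset.univ.filter fun p => p.1 < p.2 ∧ w p.2 < w p.1

/-- The number of inversions. -/
def invNum (n : ℕ) (w : Equiv.Perm (Fin n)) : ℕ := (invSet n w).card

lemma mem_invSet {n : ℕ} {w : Equiv.Perm (Fin n)} {p : Fin n × Fin n} :
    p ∈ invSet n w ↔ p.1 < p.2 ∧ w p.2 < w p.1 := by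
  simp [invSet]

lemma invNum_one (n : ℕ) : invNum n 1 = 0 := by
  rw [invNum, Finset.card_eq_zero, Finset.eq_empty_iff_forall_notMem]
  intro p hp
  rw [mem_invSet] at hp
  simp only [Equiv.Perm.one_apply] at hp
  exact absurd hp.2 (not_lt_of_gt hp.1)

/-- An adjacent swap preserves strict order except on the pair itself. -/
lemma swap_adj_lt {n : ℕ} {a b x y : Fin n} (hab : (a : ℕ) + 1 = b) (hxy : x < y)
    (hne : ¬(x = a ∧ y = b)) : Equiv.swap a b x < Equiv.swap a b y := by
  rw [Equiv.swap_apply_def, Equiv.swap_apply_def]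
  split_ifs <;> (simp only [Fin.lt_def, Fin.ext_iff] at *; omega)

lemma card_erase_invSet {n : ℕ} {a b : Fin n} (hab : (a : ℕ) + 1 = b)
    (w : Equiv.Perm (Fin n)) :
    ((invSet n (w * Equiv.swap a b)).erase (a, b)).card =
      ((invSet n w).erase (a, b)).card := by
  have hab' : a < b := by rw [Fin.lt_def]; omega
  have key : ∀ (u : Equiv.Perm (Fin n)) (p : Fin n × Fin n),
      p ∈ ((invSet n (u * Equiv.swap a b)).erase (a, b)) →
      (Equiv.swap a b p.1, Equiv.swap a b p.2) ∈ ((invSet n u).erase (a, b)) := by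
    intro u p hp
    rw [Finset.mem_erase, mem_invSet] at hp
    obtain ⟨hne, h12, hinv⟩ := hp
    have hne' : ¬(p.1 = a ∧ p.2 = b) := by
      intro ⟨h1, h2⟩; exact hne (by rw [Prod.ext_iff]; exact ⟨h1, h2⟩)
    refine Finset.mem_erase.2 ⟨?_, mem_invSet.2 ⟨swap_adj_lt hab h12 hne', ?_⟩⟩
    · intro h
      rw [Prod.ext_iff] at h
      obtain ⟨h1, h2⟩ := h
      have : p.1 = b := by
        have := congrArg (Equiv.swap a b) h1
        rwa [Equiv.swap_apply_self, Equiv.swap_apply_left] at this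
      have : p.2 = a := by
        have := congrArg (Equiv.swap a b) h2
        rwa [Equiv.swap_apply_self, Equiv.swap_apply_right] at this
      have : b < a := by rw [← ‹p.1 = b›, ← ‹p.2 = a›]; exact h12
      exact absurd this (not_lt_of_gt hab')
    · simpa using hinv
  have key2 := key (w * Equiv.swap a b)
  simp only [mul_assoc, Equiv.swap_mul_self, mul_one] at key2
  apply Finset.card_bij'
      (i := fun p _ => (Equiv.swap a b p.1, Equiv.swap a b p.2))
      (j := fun p _ => (Equiv.swap a b p.1, Equiv.swap a b p.2))
      (hi := key w) (hj := key2)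
  · intro p _; simp
  · intro p _; simp

lemma invNum_mul_swap_adj_ascent {n : ℕ} {a b : Fin n} (hab : (a : ℕ) + 1 = b)
    {w : Equiv.Perm (Fin n)} (h : w a < w b) :
    invNum n (w * Equiv.swap a b) = invNum n w + 1 := by
  have hab' : a < b := by rw [Fin.lt_def]; omega
  have h1 : (a, b) ∉ invSet n w := by
    rw [mem_invSet]; rintro ⟨-, h2⟩; exact absurd h (not_lt_of_gt h2)
  have h2 : (a, b) ∈ invSet n (w * Equiv.swap a b) := by
    rw [mem_invSet]; exact ⟨hab', by simpa using h⟩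
  have := card_erase_invSet hab w
  rw [Finset.erase_eq_of_notMem h1] at this
  rw [invNum, invNum, ← this, Finset.card_erase_of_mem h2]
  have : 0 < (invSet n (w * Equiv.swap a b)).card := Finset.card_pos.2 ⟨_, h2⟩
  omega

lemma invNum_mul_swap_adj_descent {n : ℕ} {a b : Fin n} (hab : (a : ℕ) + 1 = b)
    {w : Equiv.Perm (Fin n)} (h : w b < w a) :
    invNum n w = invNum n (w * Equiv.swap a b) + 1 := by
  have h' : (w * Equiv.swap a b) a < (w * Equiv.swap a b) b := by simpa using h
  have := invNum_mul_swap_adj_ascent hab h'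
  rw [mul_assoc, Equiv.swap_mul_self, mul_one] at this
  omega

lemma simpleRefl_eq_swap {n c : ℕ} (h1 : 1 ≤ c) (h2 : c ≤ n - 1) :
    ∃ a b : Fin n, (a : ℕ) + 1 = b ∧ (a : ℕ) = c - 1 ∧ (b : ℕ) = c ∧
      simpleRefl n c = Equiv.swap a b := by
  refine ⟨⟨c - 1, by omega⟩, ⟨c, by omega⟩, by simp only []; omega, rfl, rfl, ?_⟩
  rw [simpleRefl, dif_pos ⟨h1, h2⟩]

lemma simpleRefl_out {n c : ℕ} (h : ¬(1 ≤ c ∧ c ≤ n - 1)) : simpleRefl n c = 1 := by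
  rw [simpleRefl, dif_neg h]

lemma simpleRefl_mul_self (n c : ℕ) : simpleRefl n c * simpleRefl n c = 1 := by
  by_cases h : 1 ≤ c ∧ c ≤ n - 1
  · obtain ⟨a, b, hab, -, -, hs⟩ := simpleRefl_eq_swap h.1 h.2
    rw [hs, Equiv.swap_mul_self]
  · rw [simpleRefl_out h, one_mul]

lemma invNum_mul_simpleRefl_le {n : ℕ} (w : Equiv.Perm (Fin n)) (c : ℕ) :
    invNum n (w * simpleRefl n c) ≤ invNum n w + 1 := by
  by_cases h : 1 ≤ c ∧ c ≤ n - 1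
  · obtain ⟨a, b, hab, -, -, hs⟩ := simpleRefl_eq_swap h.1 h.2
    rw [hs]
    rcases lt_trichotomy (w a) (w b) with h' | h' | h'
    · rw [invNum_mul_swap_adj_ascent hab h']
    · exact absurd (w.injective h') (by intro hh; rw [hh] at hab; omega)
    · have := invNum_mul_swap_adj_descent hab h'; omega
  · rw [simpleRefl_out h, mul_one]; omega

/-- A permutation with no descent is the identity. -/
lemma eq_one_of_no_descent {n : ℕ} (w : Equiv.Perm (Fin n))
    (h : ∀ a b : Fin n, (a : ℕ) + 1 = b → w a < w b) : w = 1 := by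
  have hle : ∀ k : ℕ, ∀ a : Fin n, (a : ℕ) = k → k ≤ ((w a : Fin n) : ℕ) := by
    intro k
    induction k with
    | zero => intro a _; omega
    | succ m ih =>
        intro a ha
        have hm : m < n := by have := a.isLt; omega
        have h2 := h ⟨m, hm⟩ a (by simp only []; omega)
        have h3 := ih ⟨m, hm⟩ rfl
        have h4 := Fin.lt_def.1 h2
        omega
  have hsum : ∑ a : Fin n, ((w a : Fin n) : ℕ) = ∑ a : Fin n, (a : ℕ) :=
    Equiv.sum_comp w (fun a => (a : ℕ))
  have hkey := (Finset.sum_eq_sum_iff_of_le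
      (f := fun a : Fin n => (a : ℕ)) (g := fun a : Fin n => ((w a : Fin n) : ℕ))
      (fun i _ => hle i i rfl)).1 hsum.symm
  ext a
  have h5 : (a : ℕ) = ((w a : Fin n) : ℕ) := by simpa using hkey a (Finset.mem_univ a)
  simp only [Equiv.Perm.one_apply]
  exact h5.symm

lemma exists_descent {n : ℕ} {w : Equiv.Perm (Fin n)} (h : w ≠ 1) :
    ∃ c : ℕ, 1 ≤ c ∧ c ≤ n - 1 ∧ ∃ a b : Fin n, (a : ℕ) + 1 = b ∧ (a : ℕ) = c - 1 ∧
      (b : ℕ) = c ∧ simpleRefl n c = Equiv.swap a b ∧ w b < w a := by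
  by_contra hc
  push_neg at hc
  apply h
  apply eq_one_of_no_descent
  intro a b hab
  have hb : (b : ℕ) ≤ n - 1 := by have := b.isLt; omega
  have h1 : 1 ≤ (b : ℕ) := by omega
  obtain ⟨a', b', hab', ha', hb', hs⟩ := simpleRefl_eq_swap (n := n) h1 hb
  have haa : a' = a := Fin.ext (by omega)
  have hbb : b' = b := Fin.ext (by omega)
  rcases lt_trichotomy (w a) (w b) with h' | h' | h'
  · exact h'
  · exact absurd (w.injective h') (by intro hh; rw [hh] at hab; omega)
  · exact absurd h' (by
      have := hc (b : ℕ) h1 hb a' b' hab' ha' hb' hs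
      rw [haa, hbb] at this
      exact not_lt.2 this)


/-! ### Word products and length -/

lemma wordProd_nil (n : ℕ) : wordProd n [] = 1 := rfl

lemma wordProd_cons (n : ℕ) (c : ℕ) (l : List ℕ) :
    wordProd n (c :: l) = simpleRefl n c * wordProd n l := by
  simp [wordProd]

lemma wordProd_append (n : ℕ) (l l' : List ℕ) :
    wordProd n (l ++ l') = wordProd n l * wordProd n l' := by
  simp [wordProd]

lemma wordProd_singleton (n : ℕ) (c : ℕ) : wordProd n [c] = simpleRefl n c := by
  simp [wordProd]

lemma wordProd_reverse (n : ℕ) (l : List ℕ) :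
    wordProd n l.reverse = (wordProd n l)⁻¹ := by
  induction l with
  | nil => simp [wordProd]
  | cons c m ih =>
      rw [List.reverse_cons, wordProd_append, wordProd_singleton, ih, wordProd_cons,
        mul_inv_rev]
      congr 1
      exact eq_inv_iff_mul_eq_one.2 (simpleRefl_mul_self n c)

lemma invNum_wordProd_le (n : ℕ) (l : List ℕ) : invNum n (wordProd n l) ≤ l.length := by
  induction l using List.reverseRecOn with
  | nil => simp [wordProd, invNum_one]
  | append_singleton m c ih =>
      rw [wordProd_append, wordProd_singleton, List.length_append]
      have := invNum_mul_simpleRefl_le (wordProd n m) c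
      simp only [List.length_singleton]
      omega

lemma exists_word_invNum_aux (n : ℕ) : ∀ (k : ℕ) (w : Equiv.Perm (Fin n)),
    invNum n w = k → ∃ l : List ℕ, (∀ j ∈ l, 1 ≤ j ∧ j ≤ n - 1) ∧ l.length = invNum n w ∧
      wordProd n l = w := by
  intro k
  induction k using Nat.strong_induction_on with
  | _ k ih =>
    intro w hk
    rcases eq_or_ne w 1 with rfl | hw
    · exact ⟨[], by simp, by rw [invNum_one]; rfl, rfl⟩
    · obtain ⟨c, hc1, hc2, a, b, hab, -, -, hs, hdesc⟩ := exists_descent hw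
      have hd : invNum n (w * simpleRefl n c) + 1 = k := by
        rw [hs, ← hk]; exact (invNum_mul_swap_adj_descent hab hdesc).symm
      obtain ⟨l, hl1, hl2, hl3⟩ := ih (invNum n (w * simpleRefl n c)) (by omega)
        (w * simpleRefl n c) rfl
      refine ⟨l ++ [c], ?_, ?_, ?_⟩
      · intro j hj
        rcases List.mem_append.1 hj with h | h
        · exact hl1 j h
        · simp only [List.mem_singleton] at h; subst h; exact ⟨hc1, hc2⟩
      · simp only [List.length_append, List.length_singleton]; omega
      · rw [wordProd_append, wordProd_singleton, hl3, mul_assoc, simpleRefl_mul_self,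
          mul_one]

/-- There is a word of length `invNum` for every permutation. -/
lemma exists_word_invNum (n : ℕ) (w : Equiv.Perm (Fin n)) :
    ∃ l : List ℕ, (∀ j ∈ l, 1 ≤ j ∧ j ≤ n - 1) ∧ l.length = invNum n w ∧
      wordProd n l = w :=
  exists_word_invNum_aux n (invNum n w) w rfl

lemma len_eq_invNum (n : ℕ) (w : Equiv.Perm (Fin n)) : len n w = invNum n w := by
  obtain ⟨l, hl1, hl2, hl3⟩ := exists_word_invNum n w
  apply le_antisymm
  · exact Nat.sInf_le ⟨l, hl1, hl2, hl3⟩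
  · have hmem : len n w ∈ {k | ∃ l : List ℕ, (∀ j ∈ l, 1 ≤ j ∧ j ≤ n - 1) ∧
        l.length = k ∧ wordProd n l = w} := Nat.sInf_mem ⟨l.length, l, hl1, rfl, hl3⟩
    obtain ⟨m, -, hm2, hm3⟩ := hmem
    rw [← hm2, ← hm3]
    exact invNum_wordProd_le n m

lemma exists_reduced_word (n : ℕ) (w : Equiv.Perm (Fin n)) :
    ∃ l : List ℕ, IsReduced n l ∧ wordProd n l = w := by
  obtain ⟨l, hl1, hl2, hl3⟩ := exists_word_invNum n w
  exact ⟨l, ⟨hl1, by rw [hl3, len_eq_invNum, hl2]⟩, hl3⟩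

lemma len_one (n : ℕ) : len n 1 = 0 := by rw [len_eq_invNum, invNum_one]

lemma eq_one_of_invNum_eq_zero {n : ℕ} {w : Equiv.Perm (Fin n)}
    (h : invNum n w = 0) : w = 1 := by
  by_contra hw
  obtain ⟨c, -, -, a, b, hab, -, -, -, hdesc⟩ := exists_descent hw
  have hab' : a < b := by rw [Fin.lt_def]; omega
  have : (a, b) ∈ invSet n w := mem_invSet.2 ⟨hab', hdesc⟩
  have := Finset.card_pos.2 ⟨_, this⟩
  rw [invNum] at h
  omega


/-! ### Part B: strong exchange and reduction to reduced sublists -/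

lemma swap_comm_of_apply {n : ℕ} (u : Equiv.Perm (Fin n)) (a b : Fin n) :
    Equiv.swap (u a) (u b) * u = u * Equiv.swap a b := by
  rw [Equiv.swap_apply_apply]
  group

/-- Strong exchange, flip form: if `w = wordProd l` has the inversion `(a,b)`,
then some letter of `l` can be deleted to produce a word for `w * swap a b`. -/
lemma exchange_flip {n : ℕ} : ∀ (l : List ℕ) (a b : Fin n), a < b →
    wordProd n l b < wordProd n l a →
    ∃ l₁ c l₂, l = l₁ ++ c :: l₂ ∧
      wordProd n (l₁ ++ l₂) = wordProd n l * Equiv.swap a b := by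
  intro l
  induction l with
  | nil =>
      intro a b hab h
      rw [wordProd_nil] at h
      simp only [Equiv.Perm.one_apply] at h
      exact absurd h (not_lt_of_gt hab)
  | cons c rest ih =>
      intro a b hab h
      rw [wordProd_cons] at h
      set u := wordProd n rest with hu
      rcases lt_trichotomy (u a) (u b) with hud | hud | hud
      · -- the first letter flips the inversion
        by_cases hcr : 1 ≤ c ∧ c ≤ n - 1
        · obtain ⟨p, q, hpq, -, -, hs⟩ := simpleRefl_eq_swap hcr.1 hcr.2
          by_cases hpa : u a = p ∧ u b = q
          · refine ⟨[], c, rest, rfl, ?_⟩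
            have key : simpleRefl n c * u = u * Equiv.swap a b := by
              rw [hs, ← hpa.1, ← hpa.2]
              exact swap_comm_of_apply u a b
            rw [List.nil_append, wordProd_cons, key, mul_assoc, Equiv.swap_mul_self,
              mul_one]
          · exfalso
            have := swap_adj_lt hpq hud hpa
            rw [← hs] at this
            simp only [Equiv.Perm.mul_apply] at h
            exact absurd this (not_lt_of_gt h)
        · exfalso
          rw [simpleRefl_out hcr, one_mul] at h
          exact absurd hud (not_lt_of_gt h)
      · exact absurd (u.injective hud) (by intro hh; rw [hh] at hab; exact lt_irrefl _ hab)
      · obtain ⟨l₁, d, l₂, hsplit, hprod⟩ := ih a b hab hud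
        refine ⟨c :: l₁, d, l₂, by rw [hsplit]; rfl, ?_⟩
        have : (c :: l₁) ++ l₂ = c :: (l₁ ++ l₂) := rfl
        rw [this, wordProd_cons, hprod, wordProd_cons, ← hu, mul_assoc]

/-- Every word with letters in range contains a reduced sublist with the same product. -/
lemma exists_reduced_sublist {n : ℕ} : ∀ (l : List ℕ), (∀ j ∈ l, 1 ≤ j ∧ j ≤ n - 1) →
    ∃ l', l'.Sublist l ∧ IsReduced n l' ∧ wordProd n l' = wordProd n l := by
  intro l
  induction l using List.reverseRecOn with
  | nil =>
      exact fun _ => ⟨[], by simp, ⟨by simp, by rw [wordProd_nil, len_one]; rfl⟩, rfl⟩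
  | append_singleton m c ih =>
      intro hrange
      obtain ⟨m', hsub, ⟨hm'range, hm'red⟩, hprod⟩ :=
        ih (fun j hj => hrange j (by simp [hj]))
      have hsubm : m'.Sublist (m ++ [c]) := hsub.trans (List.sublist_append_left m [c])
      have hc := hrange c (by simp)
      obtain ⟨a, b, hab, -, -, hs⟩ := simpleRefl_eq_swap (n := n) hc.1 hc.2
      set u := wordProd n m' with hu
      have hlenu : invNum n u = m'.length := by rw [← len_eq_invNum]; exact hm'red
      have hprodmc : wordProd n (m ++ [c]) = u * Equiv.swap a b := by
        rw [wordProd_append, wordProd_singleton, hprod, hs]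
      rcases lt_trichotomy (u a) (u b) with hud | hud | hud
      · refine ⟨m' ++ [c], hsub.append (List.Sublist.refl _), ⟨?_, ?_⟩, ?_⟩
        · intro j hj
          rcases List.mem_append.1 hj with hj | hj
          · exact hm'range j hj
          · simp only [List.mem_singleton] at hj; subst hj; exact hc
        · rw [wordProd_append, wordProd_singleton, ← hu, hs, len_eq_invNum,
            invNum_mul_swap_adj_ascent hab hud, List.length_append, hlenu]
          rfl
        · rw [wordProd_append, wordProd_singleton, ← hu, hprodmc, hs]
      · exact absurd (u.injective hud) (by intro hh; rw [hh] at hab; omega)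
      · obtain ⟨l₁, d, l₂, hsplit, hfprod⟩ := exchange_flip m' a b
          (by rw [Fin.lt_def]; omega) hud
        refine ⟨l₁ ++ l₂, ?_, ⟨?_, ?_⟩, ?_⟩
        · refine List.Sublist.trans ?_ hsubm
          rw [hsplit]
          exact (List.Sublist.refl l₁).append (List.sublist_cons_self d l₂)
        · intro j hj
          apply hm'range j
          rw [hsplit]
          rcases List.mem_append.1 hj with hj | hj
          · exact List.mem_append.2 (Or.inl hj)
          · exact List.mem_append.2 (Or.inr (List.mem_cons_of_mem d hj))
        · rw [hfprod, ← hu, len_eq_invNum]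
          have hdesc := invNum_mul_swap_adj_descent hab hud
          have hm'len : m'.length = l₁.length + 1 + l₂.length := by
            rw [hsplit]; simp; omega
          rw [List.length_append]
          omega
        · rw [hfprod, ← hu, hprodmc]


/-! ### Part D: Bruhat order via chains -/

/-- One Bruhat step: right multiplication by a transposition turning a
non-inversion into an inversion. -/
def bstep (n : ℕ) (u v : Equiv.Perm (Fin n)) : Prop :=
  ∃ a b : Fin n, a < b ∧ u a < u b ∧ v = u * Equiv.swap a b

/-- Bruhat order as the reflexive-transitive closure of Bruhat steps. -/
def ble (n : ℕ) : Equiv.Perm (Fin n) → Equiv.Perm (Fin n) → Prop :=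
  Relation.ReflTransGen (bstep n)

lemma invNum_inv {n : ℕ} (w : Equiv.Perm (Fin n)) : invNum n w⁻¹ = invNum n w := by
  rw [invNum, invNum]
  apply Finset.card_bij' (i := fun p _ => ((w⁻¹ : Equiv.Perm (Fin n)) p.2, w⁻¹ p.1))
      (j := fun p _ => (w p.2, w p.1))
  · intro p hp
    rw [mem_invSet] at hp ⊢
    refine ⟨hp.2, ?_⟩
    simp only [Equiv.Perm.coe_inv, Equiv.apply_symm_apply]
    exact hp.1
  · intro p hp
    rw [mem_invSet] at hp ⊢
    refine ⟨hp.2, ?_⟩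
    simp only [Equiv.Perm.coe_inv, Equiv.symm_apply_apply]
    exact hp.1
  · intro p hp; simp
  · intro p hp; simp

lemma invNum_swap_mul_ascent {n : ℕ} {a b : Fin n} (hab : (a : ℕ) + 1 = b)
    {w : Equiv.Perm (Fin n)} (h : w⁻¹ a < w⁻¹ b) :
    invNum n (Equiv.swap a b * w) = invNum n w + 1 := by
  have key := invNum_mul_swap_adj_ascent hab (w := w⁻¹) h
  have h2 : (w⁻¹ * Equiv.swap a b)⁻¹ = Equiv.swap a b * w := by
    rw [mul_inv_rev, inv_inv, Equiv.swap_inv]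
  rw [← invNum_inv (w⁻¹ * Equiv.swap a b), h2, invNum_inv] at key
  exact key

lemma invNum_swap_mul_descent {n : ℕ} {a b : Fin n} (hab : (a : ℕ) + 1 = b)
    {w : Equiv.Perm (Fin n)} (h : w⁻¹ b < w⁻¹ a) :
    invNum n w = invNum n (Equiv.swap a b * w) + 1 := by
  have h' : (Equiv.swap a b * w)⁻¹ a < (Equiv.swap a b * w)⁻¹ b := by
    rw [mul_inv_rev, Equiv.swap_inv]
    simpa using h
  have := invNum_swap_mul_ascent hab h'
  rw [← mul_assoc, Equiv.swap_mul_self, one_mul] at this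
  omega

/-- Ascent by left multiplication with a transposition of adjacent values. -/
lemma bstep_swap_mul {n : ℕ} {a b : Fin n} (hab : (a : ℕ) + 1 = b)
    {w : Equiv.Perm (Fin n)} (h : w⁻¹ a < w⁻¹ b) :
    bstep n w (Equiv.swap a b * w) := by
  refine ⟨w⁻¹ a, w⁻¹ b, h, ?_, ?_⟩
  · simp only [Equiv.Perm.coe_inv, Equiv.apply_symm_apply]
    rw [Fin.lt_def]; omega
  · have := swap_comm_of_apply w (w⁻¹ a) (w⁻¹ b)
    simp only [Equiv.Perm.coe_inv, Equiv.apply_symm_apply] at this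
    exact this

lemma ble_refl {n : ℕ} (u : Equiv.Perm (Fin n)) : ble n u u := Relation.ReflTransGen.refl

lemma ble_trans {n : ℕ} {u v x : Equiv.Perm (Fin n)} (h1 : ble n u v) (h2 : ble n v x) :
    ble n u x := Relation.ReflTransGen.trans h1 h2

lemma ble_of_bstep {n : ℕ} {u v : Equiv.Perm (Fin n)} (h : bstep n u v) : ble n u v :=
  Relation.ReflTransGen.single h

/-- Left lifting property, unconditional form. -/
lemma ble_lift {n : ℕ} {a b : Fin n} (hab : (a : ℕ) + 1 = b)
    {u v : Equiv.Perm (Fin n)} (hle : ble n u v) (hasc : v⁻¹ a < v⁻¹ b) :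
    ble n (Equiv.swap a b * u) (Equiv.swap a b * v) := by
  induction hle using Relation.ReflTransGen.head_induction_on with
  | refl => exact ble_refl _
  | head hstep hxv ih =>
      rename_i u' x
      obtain ⟨p, q, hpq, hval, hx⟩ := hstep
      by_cases hcase : u' p = a ∧ u' q = b
      · have hux : Equiv.swap a b * u' = x := by
          rw [← hcase.1, ← hcase.2, swap_comm_of_apply u' p q, hx]
        rw [hux]
        exact ble_trans hxv (ble_of_bstep (bstep_swap_mul hab hasc))
      · refine Relation.ReflTransGen.head ⟨p, q, hpq, ?_, ?_⟩ ih
        · simp only [Equiv.Perm.mul_apply]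
          exact swap_adj_lt hab hval hcase
        · rw [hx, mul_assoc]

/-- Right lifting property, unconditional form. -/
lemma ble_lift_right {n : ℕ} {a b : Fin n} (hab : (a : ℕ) + 1 = b)
    {u v : Equiv.Perm (Fin n)} (hle : ble n u v) (hasc : v a < v b) :
    ble n (u * Equiv.swap a b) (v * Equiv.swap a b) := by
  have hablt : a < b := by rw [Fin.lt_def]; omega
  induction hle using Relation.ReflTransGen.head_induction_on with
  | refl => exact ble_refl _
  | head hstep hxv ih =>
      rename_i u' x
      obtain ⟨p, q, hpq, hval, hx⟩ := hstep
      by_cases hcase : p = a ∧ q = b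
      · have hux : u' * Equiv.swap a b = x := by rw [← hcase.1, ← hcase.2, ← hx]
        rw [hux]
        exact ble_trans hxv (ble_of_bstep ⟨a, b, hablt, hasc, rfl⟩)
      · refine Relation.ReflTransGen.head
          ⟨Equiv.swap a b p, Equiv.swap a b q, swap_adj_lt hab hpq hcase, ?_, ?_⟩ ih
        · simp only [Equiv.Perm.mul_apply, Equiv.swap_apply_self]
          exact hval
        · have hss : Equiv.swap (Equiv.swap a b p) (Equiv.swap a b q)
              = Equiv.swap a b * Equiv.swap p q * (Equiv.swap a b)⁻¹ :=
            Equiv.swap_apply_apply (Equiv.swap a b) p q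
          rw [hx, hss, Equiv.swap_inv]
          simp only [mul_assoc, Equiv.swap_mul_self_mul]

lemma w0_mul_self (n : ℕ) : w0 n * w0 n = 1 := by
  ext x
  simp [w0, Equiv.Perm.mul_apply, Fin.rev_rev]

lemma w0_apply {n : ℕ} (x : Fin n) : w0 n x = x.rev := rfl

lemma bstep_w0 {n : ℕ} {u v : Equiv.Perm (Fin n)} (h : bstep n u v) :
    bstep n (v * w0 n) (u * w0 n) := by
  obtain ⟨a, b, hab, hval, hv⟩ := h
  have h1 : (v * w0 n) b.rev = u a := by
    simp only [Equiv.Perm.mul_apply, w0_apply, Fin.rev_rev, hv]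
    simp
  have h2 : (v * w0 n) a.rev = u b := by
    simp only [Equiv.Perm.mul_apply, w0_apply, Fin.rev_rev, hv]
    simp
  refine ⟨b.rev, a.rev, Fin.rev_lt_rev.2 hab, ?_, ?_⟩
  · rw [h1, h2]; exact hval
  · ext x
    simp only [Equiv.Perm.mul_apply]
    suffices hsuf : u ((w0 n) x) = v ((w0 n) (Equiv.swap b.rev a.rev x)) from
      congrArg Fin.val hsuf
    rcases eq_or_ne x b.rev with rfl | hxb
    · rw [Equiv.swap_apply_left, w0_apply, w0_apply, Fin.rev_rev, Fin.rev_rev, hv]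
      simp
    · rcases eq_or_ne x a.rev with rfl | hxa
      · rw [Equiv.swap_apply_right, w0_apply, w0_apply, Fin.rev_rev, Fin.rev_rev, hv]
        simp
      · rw [Equiv.swap_apply_of_ne_of_ne hxb hxa, hv]
        have h1' : (w0 n) x ≠ a := fun hh => hxa (by
          rw [w0_apply] at hh; rw [← hh, Fin.rev_rev])
        have h2' : (w0 n) x ≠ b := fun hh => hxb (by
          rw [w0_apply] at hh; rw [← hh, Fin.rev_rev])
        simp only [Equiv.Perm.mul_apply]
        rw [Equiv.swap_apply_of_ne_of_ne h1' h2']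

lemma ble_w0 {n : ℕ} {u v : Equiv.Perm (Fin n)} (h : ble n u v) :
    ble n (v * w0 n) (u * w0 n) := by
  induction h with
  | refl => exact ble_refl _
  | tail hux hstep ih =>
      exact ble_trans (ble_of_bstep (bstep_w0 hstep)) ih

lemma eq_one_of_ble_one {n : ℕ} {u : Equiv.Perm (Fin n)} (h : ble n u 1) : u = 1 := by
  rcases Relation.ReflTransGen.cases_tail h with heq | ⟨x, hux, hstep⟩
  · exact heq.symm
  · exfalso
    obtain ⟨a, b, hab, hval, hx⟩ := hstep
    have hxs : x = Equiv.swap a b := by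
      have := congrArg (· * Equiv.swap a b) hx
      simpa [mul_assoc, Equiv.swap_mul_self] using this.symm
    rw [hxs, Equiv.swap_apply_left, Equiv.swap_apply_right] at hval
    exact absurd hval (not_lt_of_gt hab)


/-! ### Subword properties -/

lemma exists_reduced_subword_of_ble {n : ℕ} {u v : Equiv.Perm (Fin n)} (h : ble n u v) :
    ∀ l : List ℕ, IsReduced n l → wordProd n l = v →
      ∃ l', l'.Sublist l ∧ IsReduced n l' ∧ wordProd n l' = u := by
  induction h with
  | refl => exact fun l hred hl => ⟨l, List.Sublist.refl l, hred, hl⟩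
  | tail hux hstep ih =>
      rename_i x c
      intro l hred hl
      obtain ⟨a, b, hab, hval, hc⟩ := hstep
      have hdesc : wordProd n l b < wordProd n l a := by
        rw [hl, hc]
        simp only [Equiv.Perm.mul_apply, Equiv.swap_apply_left, Equiv.swap_apply_right]
        exact hval
      obtain ⟨l₁, d, l₂, hsplit, hprod⟩ := exchange_flip l a b hab hdesc
      have hx : wordProd n (l₁ ++ l₂) = x := by
        rw [hprod, hl, hc, mul_assoc, Equiv.swap_mul_self, mul_one]
      have hrange : ∀ j ∈ l₁ ++ l₂, 1 ≤ j ∧ j ≤ n - 1 := by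
        intro j hj
        apply hred.1 j
        rw [hsplit]
        rcases List.mem_append.1 hj with hj | hj
        · exact List.mem_append.2 (Or.inl hj)
        · exact List.mem_append.2 (Or.inr (List.mem_cons_of_mem d hj))
      obtain ⟨d', hd'sub, hd'red, hd'prod⟩ := exists_reduced_sublist (l₁ ++ l₂) hrange
      obtain ⟨l', hsub, hred', hprod'⟩ := ih d' hd'red (by rw [hd'prod, hx])
      have hsubl : (l₁ ++ l₂).Sublist l := by
        rw [hsplit]
        exact (List.Sublist.refl l₁).append (List.sublist_cons_self d l₂)
      exact ⟨l', hsub.trans (hd'sub.trans hsubl), hred', hprod'⟩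

lemma reduced_cons_spec {n : ℕ} {c : ℕ} {m : List ℕ} (h : IsReduced n (c :: m)) :
    IsReduced n m ∧ ∃ a b : Fin n, (a : ℕ) + 1 = b ∧ (a : ℕ) = c - 1 ∧ (b : ℕ) = c ∧
      simpleRefl n c = Equiv.swap a b ∧
      (wordProd n m)⁻¹ a < (wordProd n m)⁻¹ b := by
  have hc : 1 ≤ c ∧ c ≤ n - 1 := h.1 c List.mem_cons_self
  obtain ⟨a, b, hab, ha, hb, hs⟩ := simpleRefl_eq_swap (n := n) hc.1 hc.2
  have hlen : invNum n (Equiv.swap a b * wordProd n m) = m.length + 1 := by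
    have := h.2
    rw [wordProd_cons, hs, len_eq_invNum] at this
    rw [this]; rfl
  have hle : invNum n (wordProd n m) ≤ m.length := invNum_wordProd_le n m
  have hmrange : ∀ j ∈ m, 1 ≤ j ∧ j ≤ n - 1 := fun j hj => h.1 j (List.mem_cons_of_mem c hj)
  rcases lt_trichotomy ((wordProd n m)⁻¹ a) ((wordProd n m)⁻¹ b) with hcmp | hcmp | hcmp
  · have hasc := invNum_swap_mul_ascent hab hcmp
    refine ⟨⟨hmrange, ?_⟩, a, b, hab, ha, hb, hs, hcmp⟩
    rw [len_eq_invNum]; omega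
  · exact absurd ((wordProd n m)⁻¹.injective hcmp)
      (by intro hh; rw [hh] at hab; omega)
  · have hdesc := invNum_swap_mul_descent hab hcmp
    omega

lemma ble_of_reduced_sublist_aux {n : ℕ} : ∀ (l l' : List ℕ), IsReduced n l →
    l'.Sublist l → IsReduced n l' → ble n (wordProd n l') (wordProd n l) := by
  intro l
  induction l with
  | nil =>
      intro l' _ hsub _
      rw [List.sublist_nil.1 hsub]
      exact ble_refl _
  | cons c m ih =>
      intro l' hred hsub hred'
      obtain ⟨hmred, a, b, hab, ha, hb, hs, hasc⟩ := reduced_cons_spec hred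
      rw [wordProd_cons, hs]
      cases hsub with
      | cons _ hsub' =>
          exact ble_trans (ih l' hmred hsub' hred')
            (ble_of_bstep (bstep_swap_mul hab hasc))
      | cons_cons _ hsub' =>
          rename_i r
          obtain ⟨hrred, a', b', hab', ha', hb', hs', -⟩ := reduced_cons_spec hred'
          have haa : a' = a := Fin.ext (by omega)
          have hbb : b' = b := Fin.ext (by omega)
          rw [haa, hbb] at hs'
          rw [wordProd_cons, hs']
          exact ble_lift hab (ih r hmred hsub' hrred) hasc

lemma ble_of_sublist_of_reduced {n : ℕ} {l l' : List ℕ} (hred : IsReduced n l)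
    (hsub : l'.Sublist l) : ble n (wordProd n l') (wordProd n l) := by
  have hrange : ∀ j ∈ l', 1 ≤ j ∧ j ≤ n - 1 := fun j hj => hred.1 j (hsub.subset hj)
  obtain ⟨l'', hsub'', hred'', hprod''⟩ := exists_reduced_sublist l' hrange
  rw [← hprod'']
  exact ble_of_reduced_sublist_aux l l'' hred (hsub''.trans hsub) hred''


/-! ### The Demazure product -/

lemma demProd_nil (n : ℕ) : demProd n [] = 1 := rfl

lemma demProd_append_singleton (n : ℕ) (M : List ℕ) (c : ℕ) :
    demProd n (M ++ [c]) = demStep n (demProd n M) c := by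
  rw [demProd, List.foldl_append]
  rfl

lemma demStep_trichotomy {n : ℕ} (w : Equiv.Perm (Fin n)) (c : ℕ) :
    (simpleRefl n c = 1 ∧ demStep n w c = w) ∨
    (∃ a b : Fin n, (a : ℕ) + 1 = b ∧ simpleRefl n c = Equiv.swap a b ∧ w a < w b ∧
      demStep n w c = w * Equiv.swap a b) ∨
    (∃ a b : Fin n, (a : ℕ) + 1 = b ∧ simpleRefl n c = Equiv.swap a b ∧ w b < w a ∧
      demStep n w c = w) := by
  by_cases hc : 1 ≤ c ∧ c ≤ n - 1
  · obtain ⟨a, b, hab, -, -, hs⟩ := simpleRefl_eq_swap (n := n) hc.1 hc.2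
    rcases lt_trichotomy (w a) (w b) with h | h | h
    · refine Or.inr (Or.inl ⟨a, b, hab, hs, h, ?_⟩)
      rw [demStep, if_pos, hs]
      rw [hs, len_eq_invNum, len_eq_invNum, invNum_mul_swap_adj_ascent hab h]
      omega
    · exact absurd (w.injective h) (by intro hh; rw [hh] at hab; omega)
    · refine Or.inr (Or.inr ⟨a, b, hab, hs, h, ?_⟩)
      rw [demStep, if_neg]
      rw [hs, len_eq_invNum, len_eq_invNum]
      have := invNum_mul_swap_adj_descent hab h
      omega
  · refine Or.inl ⟨simpleRefl_out hc, ?_⟩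
    rw [demStep, simpleRefl_out hc, mul_one, if_neg (lt_irrefl _)]

/-- KEY, easy direction: the product of any sublist is below the Demazure product. -/
lemma ble_wordProd_demProd {n : ℕ} : ∀ (W l' : List ℕ), l'.Sublist W →
    ble n (wordProd n l') (demProd n W) := by
  intro W
  induction W using List.reverseRecOn with
  | nil =>
      intro l' h
      rw [List.sublist_nil.1 h]
      exact ble_refl _
  | append_singleton M c ih =>
      intro l' hsub
      rw [demProd_append_singleton]
      obtain ⟨l₁, l₂, rfl, h₁, h₂⟩ := List.sublist_append_iff.1 hsub
      set D := demProd n M with hD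
      have hbase : ble n (wordProd n l₁) D := ih l₁ h₁
      have hDstep : ble n D (demStep n D c) := by
        rcases demStep_trichotomy D c with ⟨-, h⟩ | ⟨a, b, hab, hs, hval, h⟩ |
            ⟨a, b, hab, hs, hval, h⟩
        · rw [h]; exact ble_refl _
        · rw [h]
          exact ble_of_bstep ⟨a, b, by rw [Fin.lt_def]; omega, hval, rfl⟩
        · rw [h]; exact ble_refl _
      rcases List.sublist_singleton.1 h₂ with rfl | rfl
      · rw [List.append_nil]
        exact ble_trans hbase hDstep
      · rw [wordProd_append, wordProd_singleton]
        rcases demStep_trichotomy D c with ⟨hs, h⟩ | ⟨a, b, hab, hs, hval, h⟩ |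
            ⟨a, b, hab, hs, hval, h⟩
        · rw [h, hs, mul_one]
          exact hbase
        · rw [h, hs]
          exact ble_lift_right hab hbase hval
        · -- descent case: need  wordProd l₁ * s_c ≤ D
          rw [h, hs]
          obtain ⟨m, hmred, hmprod⟩ := exists_reduced_word n (D * Equiv.swap a b)
          have hc : 1 ≤ c ∧ c ≤ n - 1 := by
            by_contra hcc
            rw [simpleRefl_out hcc] at hs
            have : (1 : Equiv.Perm (Fin n)) a = Equiv.swap a b a := by rw [hs]
            simp only [Equiv.Perm.one_apply, Equiv.swap_apply_left] at this
            rw [this] at hab; omega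
          have hmmred : IsReduced n (m ++ [c]) := by
            constructor
            · intro j hj
              rcases List.mem_append.1 hj with hj | hj
              · exact hmred.1 j hj
              · simp only [List.mem_singleton] at hj; subst hj; exact hc
            · rw [wordProd_append, wordProd_singleton, hmprod, hs, mul_assoc,
                Equiv.swap_mul_self, mul_one, len_eq_invNum,
                invNum_mul_swap_adj_descent hab hval, ← len_eq_invNum, ← hmprod, hmred.2]
              simp
          have hmmprod : wordProd n (m ++ [c]) = D := by
            rw [wordProd_append, wordProd_singleton, hmprod, hs, mul_assoc,
              Equiv.swap_mul_self, mul_one]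
          obtain ⟨asub, hasub, hasubred, hasubprod⟩ :=
            exists_reduced_subword_of_ble hbase (m ++ [c]) hmmred hmmprod
          obtain ⟨x, y, rfl, hx, hy⟩ := List.sublist_append_iff.1 hasub
          rcases List.sublist_singleton.1 hy with rfl | rfl
          · -- asub = x, candidate x ++ [c]
            have hcand : (x ++ [c]).Sublist (m ++ [c]) :=
              hx.append (List.Sublist.refl [c])
            have := ble_of_sublist_of_reduced hmmred hcand
            rw [hmmprod, wordProd_append, wordProd_singleton, hs] at this
            rw [List.append_nil] at hasubprod
            rw [← hasubprod]
            exact this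
          · -- asub = x ++ [c]; then wordProd l₁ * swap = wordProd x
            have hkey : wordProd n l₁ * Equiv.swap a b = wordProd n x := by
              rw [← hasubprod, wordProd_append, wordProd_singleton, hs, mul_assoc,
                Equiv.swap_mul_self, mul_one]
            rw [hkey]
            have := ble_of_sublist_of_reduced hmmred
              (hx.trans (List.sublist_append_left m [c]))
            rw [hmmprod] at this
            exact this

/-- KEY, hard direction: anything below the Demazure product is the product of a sublist. -/
lemma exists_sublist_of_ble_demProd {n : ℕ} : ∀ (W : List ℕ) (u : Equiv.Perm (Fin n)),
    ble n u (demProd n W) → ∃ l', l'.Sublist W ∧ wordProd n l' = u := by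
  intro W
  induction W using List.reverseRecOn with
  | nil =>
      intro u h
      rw [demProd_nil] at h
      exact ⟨[], List.nil_sublist _, by rw [wordProd_nil, eq_one_of_ble_one h]⟩
  | append_singleton M c ih =>
      intro u h
      rw [demProd_append_singleton] at h
      set D := demProd n M with hD
      rcases demStep_trichotomy D c with ⟨hs, hstep⟩ | ⟨a, b, hab, hs, hval, hstep⟩ |
          ⟨a, b, hab, hs, hval, hstep⟩
      · rw [hstep] at h
        obtain ⟨l', hsub, hprod⟩ := ih u h
        exact ⟨l', hsub.trans (List.sublist_append_left M [c]), hprod⟩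
      · rw [hstep] at h
        have hc : 1 ≤ c ∧ c ≤ n - 1 := by
          by_contra hcc
          rw [simpleRefl_out hcc] at hs
          have : (1 : Equiv.Perm (Fin n)) a = Equiv.swap a b a := by rw [hs]
          simp only [Equiv.Perm.one_apply, Equiv.swap_apply_left] at this
          rw [this] at hab; omega
        obtain ⟨m, hmred, hmprod⟩ := exists_reduced_word n D
        have hmmred : IsReduced n (m ++ [c]) := by
          constructor
          · intro j hj
            rcases List.mem_append.1 hj with hj | hj
            · exact hmred.1 j hj
            · simp only [List.mem_singleton] at hj; subst hj; exact hc
          · rw [wordProd_append, wordProd_singleton, hmprod, hs, len_eq_invNum,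
              invNum_mul_swap_adj_ascent hab hval, ← len_eq_invNum, ← hmprod, hmred.2]
            simp
        have hmmprod : wordProd n (m ++ [c]) = D * Equiv.swap a b := by
          rw [wordProd_append, wordProd_singleton, hmprod, hs]
        obtain ⟨asub, hasub, hasubred, hasubprod⟩ :=
          exists_reduced_subword_of_ble h (m ++ [c]) hmmred hmmprod
        obtain ⟨x, y, rfl, hx, hy⟩ := List.sublist_append_iff.1 hasub
        rcases List.sublist_singleton.1 hy with rfl | rfl
        · rw [List.append_nil] at hasubprod
          have hxD : ble n u D := by
            rw [← hasubprod, ← hmprod]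
            exact ble_of_sublist_of_reduced hmred hx
          obtain ⟨l', hsub, hprod⟩ := ih u hxD
          exact ⟨l', hsub.trans (List.sublist_append_left M [c]), hprod⟩
        · have hxD : ble n (wordProd n x) D := by
            rw [← hmprod]
            exact ble_of_sublist_of_reduced hmred hx
          obtain ⟨l', hsub, hprod⟩ := ih (wordProd n x) hxD
          refine ⟨l' ++ [c], hsub.append (List.Sublist.refl [c]), ?_⟩
          rw [wordProd_append, wordProd_singleton, hprod, ← hasubprod,
            wordProd_append, wordProd_singleton, hs]
      · rw [hstep] at h
        obtain ⟨l', hsub, hprod⟩ := ih u h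
        exact ⟨l', hsub.trans (List.sublist_append_left M [c]), hprod⟩

/-- The Bruhat order of the statement coincides with the chain order. -/
lemma bruhatLE_iff_ble {n : ℕ} (u w : Equiv.Perm (Fin n)) :
    bruhatLE n u w ↔ ble n u w := by
  constructor
  · rintro ⟨l, l', hlred, hlw, hsub, hl'red, hl'u⟩
    rw [← hlw, ← hl'u]
    exact ble_of_sublist_of_reduced hlred hsub
  · intro h
    obtain ⟨l, hred, hprod⟩ := exists_reduced_word n w
    obtain ⟨l', hsub, hred', hprod'⟩ := exists_reduced_subword_of_ble h l hred hprod
    exact ⟨l, l', hred, hprod, hsub, hred', hprod'⟩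


/-! ### Combinatorics of the triangular pairs lists -/

lemma nodup_flatMap_pairs (g : ℕ → List ℕ) : ∀ (L : List ℕ), L.Nodup →
    (∀ i, (g i).Nodup) →
    (L.flatMap fun i => (g i).map fun j => ((i, j) : ℕ × ℕ)).Nodup := by
  intro L
  induction L with
  | nil => intro _ _; simp
  | cons a L' ih =>
      intro hL hg
      rw [List.flatMap_cons, List.nodup_append]
      refine ⟨(hg a).map (fun x y hxy => by simpa using hxy), ih (List.nodup_cons.1 hL).2 hg, ?_⟩
      intro p hp q hp' hpq
      subst hpq
      obtain ⟨j, -, hpj⟩ := List.mem_map.1 hp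
      obtain ⟨i, hi, hpi⟩ := List.mem_flatMap.1 hp'
      obtain ⟨j', -, hpj'⟩ := List.mem_map.1 hpi
      have : a = i := by rw [← hpj] at hpj'; exact (Prod.ext_iff.1 hpj').1.symm
      exact (List.nodup_cons.1 hL).1 (this ▸ hi)

lemma mem_pairsLex {n : ℕ} {p : ℕ × ℕ} : p ∈ pairsLex n ↔ inTriangle n p := by
  rw [pairsLex, inTriangle]
  simp only [List.mem_flatMap, List.mem_map, List.mem_range'_1]
  constructor
  · rintro ⟨i, hi, j, hj, rfl⟩
    exact ⟨by omega, by simp; omega, by simp; omega⟩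
  · rintro ⟨h1, h2, h3⟩
    exact ⟨p.1, by omega, p.2, by omega, rfl⟩

lemma mem_pairsBar {n : ℕ} {p : ℕ × ℕ} : p ∈ pairsBar n ↔ inTriangle n p := by
  rw [pairsBar, inTriangle]
  simp only [List.mem_flatMap, List.mem_map, List.mem_reverse, List.mem_range'_1]
  constructor
  · rintro ⟨i, hi, j, hj, rfl⟩
    exact ⟨by omega, by simp; omega, by simp; omega⟩
  · rintro ⟨h1, h2, h3⟩
    exact ⟨p.1, by omega, p.2, by omega, rfl⟩

lemma pairsFin_eq (n : ℕ) : pairsFin n = (pairsBar n).reverse := by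
  rw [pairsFin, pairsBar, List.reverse_flatMap]
  congr 1
  funext i
  simp only [Function.comp, List.map_reverse, List.reverse_reverse]

lemma pairsBar_eq (n : ℕ) : pairsBar n = (pairsFin n).reverse := by
  rw [pairsFin_eq, List.reverse_reverse]

lemma mem_pairsFin {n : ℕ} {p : ℕ × ℕ} : p ∈ pairsFin n ↔ inTriangle n p := by
  rw [pairsFin_eq, List.mem_reverse, mem_pairsBar]

lemma nodup_pairsLex (n : ℕ) : (pairsLex n).Nodup :=
  nodup_flatMap_pairs _ _ (List.nodup_range') (fun _ => List.nodup_range')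

lemma nodup_pairsBar (n : ℕ) : (pairsBar n).Nodup :=
  nodup_flatMap_pairs _ _ (List.nodup_range')
    (fun _ => List.nodup_reverse.2 (List.nodup_range'))

lemma nodup_pairsFin (n : ℕ) : (pairsFin n).Nodup := by
  rw [pairsFin_eq, List.nodup_reverse]
  exact nodup_pairsBar n

lemma filter_mem_eq_of_sublist {α : Type*} {p : α → Bool} :
    ∀ {l m : List α}, l.Nodup → m.Sublist l → (∀ x ∈ l, (p x = true ↔ x ∈ m)) →
      l.filter p = m := by
  intro l
  induction l with
  | nil => intro m _ hsub _; rw [List.sublist_nil.1 hsub]; rfl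
  | cons x l' ih =>
      intro m hnd hsub hp
      obtain ⟨hx, hl'⟩ := List.nodup_cons.1 hnd
      cases hsub with
      | cons _ hsub' =>
          have hxm : x ∉ m := fun hh => hx (hsub'.subset hh)
          rw [List.filter_cons, if_neg (by
            intro hh
            exact hxm ((hp x List.mem_cons_self).1 hh))]
          exact ih hl' hsub' (fun y hy => hp y (List.mem_cons_of_mem x hy))
      | cons_cons _ hsub' =>
          rename_i m'
          rw [List.filter_cons,
            if_pos ((hp x List.mem_cons_self).2 List.mem_cons_self)]
          congr 1
          exact ih hl' hsub' (fun y hy => by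
            rw [hp y (List.mem_cons_of_mem x hy)]
            have hyx : y ≠ x := fun hh => hx (hh ▸ hy)
            simp [List.mem_cons, hyx])


/-! ### Assembly lemmas -/

lemma mul_w0_mul_w0 {n : ℕ} (x : Equiv.Perm (Fin n)) : x * w0 n * w0 n = x := by
  rw [mul_assoc, w0_mul_self, mul_one]

lemma range_of_mem_words {n : ℕ} (P Q : ℕ → ℕ → ℝ) :
    ∀ j ∈ fWord n P ++ iWord n Q, 1 ≤ j ∧ j ≤ n - 1 := by
  intro j hj
  rcases List.mem_append.1 hj with hj | hj
  · rw [fWord] at hj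
    obtain ⟨p, hp, rfl⟩ := List.mem_map.1 hj
    have := mem_pairsFin.1 (List.mem_filter.1 hp).1
    rw [inTriangle] at this
    omega
  · rw [iWord] at hj
    obtain ⟨p, hp, rfl⟩ := List.mem_map.1 hj
    have := mem_pairsLex.1 (List.mem_filter.1 hp).1
    rw [inTriangle] at this
    omega


/-- `K_{λ,μ}(w w₀) = GT(λ,w,μ)`: the union of all reduced BiKogan faces
`K_{λ,μ}(F,F')` with `ϖ(F,F') = w w₀` equals the set of pairs `(P,Q) ∈ GT(λ)×GT(μ)` with
`𝔭(P,Q) = *(w(P,Q))·w₀ ≤ w`. -/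
theorem biKogan_union_eq_GT (n : ℕ) (hn : 1 ≤ n) (lam mu : ℕ → ℤ)
    (hlam : IsPartition n lam) (hmu : IsPartition n mu) (w : Equiv.Perm (Fin n)) :
    {PQ : (ℕ → ℕ → ℝ) × (ℕ → ℕ → ℝ) | ∃ F F' : Finset (ℕ × ℕ),
        (∀ p ∈ F, inTriangle n p) ∧ (∀ p ∈ F', inTriangle n p) ∧
        biKoganReduced n F F' ∧ biVarpi n F F' = w * w0 n ∧
        PQ ∈ biKoganFace n lam mu F F'} =
    {PQ : (ℕ → ℕ → ℝ) × (ℕ → ℕ → ℝ) | PQ.1 ∈ GTset n lam ∧ PQ.2 ∈ GTset n mu ∧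
        bruhatLE n (demProd n (fWord n PQ.1 ++ iWord n PQ.2) * w0 n) w} := by
  ext PQ
  simp only [Set.mem_setOf_eq]
  constructor
  · rintro ⟨F, F', hFtri, hF'tri, hred, hvarpi, hPmem, hQmem, hfaceP, hfaceQ⟩
    refine ⟨hPmem, hQmem, ?_⟩
    rw [bruhatLE_iff_ble]
    -- the words attached to the faces
    have hsubf : ((((pairsFin n).filter (fun p => p ∈ F)).map (fun p => p.2)) :
        List ℕ).Sublist (fWord n PQ.1) := by
      rw [fWord]
      refine List.Sublist.map _ (List.monotone_filter_right _ (fun a ha => ?_))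
      exact decide_eq_true (hfaceP a (of_decide_eq_true ha))
    have hsubi : ((((pairsLex n).filter (fun p => p ∈ F')).map
        (fun p => p.1 - p.2)) : List ℕ).Sublist (iWord n PQ.2) := by
      rw [iWord]
      refine List.Sublist.map _ (List.monotone_filter_right _ (fun a ha => ?_))
      exact decide_eq_true (hfaceQ a (of_decide_eq_true ha))
    have htoF : ((pairsFin n).filter (fun p => p ∈ F)).toFinset = F := by
      ext p
      simp only [List.mem_toFinset, List.mem_filter, decide_eq_true_eq]
      exact ⟨fun h => h.2, fun h => ⟨mem_pairsFin.2 (hFtri p h), h⟩⟩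
    have htoF' : ((pairsLex n).filter (fun p => p ∈ F')).toFinset = F' := by
      ext p
      simp only [List.mem_toFinset, List.mem_filter, decide_eq_true_eq]
      exact ⟨fun h => h.2, fun h => ⟨mem_pairsLex.2 (hF'tri p h), h⟩⟩
    have hlen1 : (((pairsFin n).filter (fun p => p ∈ F)).map
        (fun p : ℕ × ℕ => p.2)).length = F.card := by
      rw [List.length_map,
        ← List.toFinset_card_of_nodup (List.Nodup.filter _ (nodup_pairsFin n)), htoF]
    have hlen2 : (((pairsLex n).filter (fun p => p ∈ F')).map
        (fun p : ℕ × ℕ => p.1 - p.2)).length = F'.card := by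
      rw [List.length_map,
        ← List.toFinset_card_of_nodup (List.Nodup.filter _ (nodup_pairsLex n)), htoF']
    have hsig1 : sigmaBarF n F =
        (wordProd n (((pairsFin n).filter (fun p => p ∈ F)).map (fun p => p.2)))⁻¹ := by
      rw [sigmaBarF, pairsBar_eq, List.filter_reverse, List.map_reverse, wordProd_reverse]
    have hsig2 : sigmaF n F' =
        wordProd n (((pairsLex n).filter (fun p => p ∈ F')).map (fun p => p.1 - p.2)) := by
      rw [sigmaF]
    have hprod : wordProd n ((((pairsFin n).filter (fun p => p ∈ F)).map (fun p => p.2)) ++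
        (((pairsLex n).filter (fun p => p ∈ F')).map (fun p => p.1 - p.2))) = w * w0 n := by
      rw [wordProd_append, ← hvarpi, biVarpi, hsig1, inv_inv, hsig2]
    have hranges : ∀ j ∈ (((pairsFin n).filter (fun p => p ∈ F)).map (fun p => p.2)) ++
        (((pairsLex n).filter (fun p => p ∈ F')).map (fun p => p.1 - p.2)),
        1 ≤ j ∧ j ≤ n - 1 := by
      intro j hj
      rcases List.mem_append.1 hj with hj | hj
      · obtain ⟨p, hp, rfl⟩ := List.mem_map.1 hj
        have := mem_pairsFin.1 (List.mem_filter.1 hp).1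
        rw [inTriangle] at this; omega
      · obtain ⟨p, hp, rfl⟩ := List.mem_map.1 hj
        have := mem_pairsLex.1 (List.mem_filter.1 hp).1
        rw [inTriangle] at this; omega
    rw [biKoganReduced] at hred
    have hlred : IsReduced n ((((pairsFin n).filter (fun p => p ∈ F)).map (fun p => p.2)) ++
        (((pairsLex n).filter (fun p => p ∈ F')).map (fun p => p.1 - p.2))) := by
      refine ⟨hranges, ?_⟩
      rw [hprod, ← hvarpi, hred, List.length_append, hlen1, hlen2]
    have hW : ble n (w * w0 n) (demProd n (fWord n PQ.1 ++ iWord n PQ.2)) := by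
      rw [← hprod]
      exact ble_wordProd_demProd _ _ (hsubf.append hsubi)
    have hfin := ble_w0 hW
    rw [mul_w0_mul_w0] at hfin
    exact hfin
  · rintro ⟨hPmem, hQmem, hble⟩
    rw [bruhatLE_iff_ble] at hble
    have hble' : ble n (w * w0 n) (demProd n (fWord n PQ.1 ++ iWord n PQ.2)) := by
      have := ble_w0 hble
      rw [mul_w0_mul_w0] at this
      exact this
    obtain ⟨l', hsubW, hprodl'⟩ := exists_sublist_of_ble_demProd _ _ hble'
    obtain ⟨l'', hsub'', hl''red, hl''prod⟩ := exists_reduced_sublist l'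
      (fun j hj => range_of_mem_words PQ.1 PQ.2 j (hsubW.subset hj))
    obtain ⟨la, lb, rfl, hla, hlb⟩ := List.sublist_append_iff.1 (hsub''.trans hsubW)
    rw [fWord] at hla
    rw [iWord] at hlb
    obtain ⟨m1, hm1sub, hm1eq⟩ := List.sublist_map_iff.1 hla
    obtain ⟨m2, hm2sub, hm2eq⟩ := List.sublist_map_iff.1 hlb
    have hm1nd : m1.Nodup :=
      List.Nodup.sublist (hm1sub.trans List.filter_sublist) (nodup_pairsFin n)
    have hm2nd : m2.Nodup :=
      List.Nodup.sublist (hm2sub.trans List.filter_sublist) (nodup_pairsLex n)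
    have hkey1 : (pairsFin n).filter (fun p => p ∈ m1.toFinset) = m1 :=
      filter_mem_eq_of_sublist (nodup_pairsFin n)
        (hm1sub.trans List.filter_sublist) (fun x _ => by simp)
    have hkey2 : (pairsLex n).filter (fun p => p ∈ m2.toFinset) = m2 :=
      filter_mem_eq_of_sublist (nodup_pairsLex n)
        (hm2sub.trans List.filter_sublist) (fun x _ => by simp)
    have hsig1 : sigmaBarF n m1.toFinset = (wordProd n la)⁻¹ := by
      rw [sigmaBarF, pairsBar_eq, List.filter_reverse, List.map_reverse, wordProd_reverse,
        hkey1, ← hm1eq]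
    have hsig2 : sigmaF n m2.toFinset = wordProd n lb := by
      rw [sigmaF, hkey2, ← hm2eq]
    have hv : biVarpi n m1.toFinset m2.toFinset = w * w0 n := by
      rw [biVarpi, hsig1, inv_inv, hsig2, ← wordProd_append, hl''prod, hprodl']
    refine ⟨m1.toFinset, m2.toFinset, ?_, ?_, ?_, hv, hPmem, hQmem, ?_, ?_⟩
    · intro p hp
      exact mem_pairsFin.1
        (List.mem_filter.1 (hm1sub.subset (List.mem_toFinset.1 hp))).1
    · intro p hp
      exact mem_pairsLex.1
        (List.mem_filter.1 (hm2sub.subset (List.mem_toFinset.1 hp))).1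
    · rw [biKoganReduced, hv]
      have hlen : len n (w * w0 n) = la.length + lb.length := by
        rw [← hprodl', ← hl''prod, hl''red.2, List.length_append]
      rw [hlen, List.toFinset_card_of_nodup hm1nd, List.toFinset_card_of_nodup hm2nd,
        hm1eq, hm2eq, List.length_map, List.length_map]
    · intro p hp
      exact of_decide_eq_true
        (List.mem_filter.1 (hm1sub.subset (List.mem_toFinset.1 hp))).2
    · intro p hp
      exact of_decide_eq_true
        (List.mem_filter.1 (hm2sub.subset (List.mem_toFinset.1 hp))).2

end KK
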